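/- Let n be a positive natural number, let U be an n×n complex unitary matrix, and let σ be a subset of the index set {1,…,n}. Then the complementary principal minor equals the determinant of U times the complex conjugate of the principal minor: det U_{σᶜσᶜ} = det U · conj(det U_{σσ}). -/

import Mathlib

open Matrix

/-- The principal minor of a matrix `M` indexed by a subset `σ` of the indices:
the determinant of the submatrix keeping rows and columns in `σ`.
By convention, the minor indexed by the empty set is `1`. -/
noncomputable def principalMinor {n : ℕ} (M : Matrix (Fin n) (Fin n) ℂ)
    (σ : Finset (Fin n)) : ℂ :=
  (M.submatrix (fun i : σ => (i : Fin n)) (fun i : σ => (i : Fin n))).det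

/-- For a unitary matrix, the complementary principal minor equals the determinant times the
complex conjugate of the principal minor (Jacobi's complementary minor identity). -/
theorem principalMinor_compl_eq {n : ℕ} (hn : 0 < n)
    (U : Matrix (Fin n) (Fin n) ℂ) (hU : Uᴴ * U = 1) (σ : Finset (Fin n)) :
    principalMinor U σᶜ = U.det * (starRingEnd ℂ) (principalMinor U σ) := by
  classical
  have hU' : U * Uᴴ = 1 := mul_eq_one_comm.mp hU
  -- |det U|^2 = 1
  have hdet : (starRingEnd ℂ) U.det * U.det = 1 := by
    have := congrArg Matrix.det hU
    simpa [Matrix.det_mul, Matrix.det_conjTranspose] using this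
  -- reindex by sum decomposition
  let e : {x // x ∈ σ} ⊕ {x // ¬ x ∈ σ} ≃ Fin n := Equiv.sumCompl (· ∈ σ)
  let V := U.submatrix e e
  let W := Uᴴ.submatrix e e
  have hVW : V * W = 1 := by
    simp only [V, W, Matrix.submatrix_mul_equiv, hU']
    exact Matrix.submatrix_one_equiv e
  -- key block identity
  have key : V * Matrix.fromBlocks 1 W.toBlocks₁₂ 0 W.toBlocks₂₂ =
      Matrix.fromBlocks V.toBlocks₁₁ 0 V.toBlocks₂₁ 1 := by
    have hW : W = Matrix.fromBlocks W.toBlocks₁₁ W.toBlocks₁₂ W.toBlocks₂₁ W.toBlocks₂₂ :=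
      (Matrix.fromBlocks_toBlocks W).symm
    have hV : V = Matrix.fromBlocks V.toBlocks₁₁ V.toBlocks₁₂ V.toBlocks₂₁ V.toBlocks₂₂ :=
      (Matrix.fromBlocks_toBlocks V).symm
    have h12 : V.toBlocks₁₁ * W.toBlocks₁₂ + V.toBlocks₁₂ * W.toBlocks₂₂ = 0 := by
      have := hVW
      rw [hV, hW, Matrix.fromBlocks_multiply] at this
      have := congrArg Matrix.toBlocks₁₂ this
      simpa [← Matrix.fromBlocks_one, Matrix.toBlocks_fromBlocks₁₂] using this
    have h22 : V.toBlocks₂₁ * W.toBlocks₁₂ + V.toBlocks₂₂ * W.toBlocks₂₂ = 1 := by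
      have := hVW
      rw [hV, hW, Matrix.fromBlocks_multiply] at this
      have := congrArg Matrix.toBlocks₂₂ this
      simpa [← Matrix.fromBlocks_one, Matrix.toBlocks_fromBlocks₂₂] using this
    conv_lhs => rw [hV]
    rw [Matrix.fromBlocks_multiply]
    simp [h12, h22]
  have hdetkey : V.det * W.toBlocks₂₂.det = V.toBlocks₁₁.det := by
    have := congrArg Matrix.det key
    simpa [Matrix.det_mul, Matrix.det_fromBlocks_zero₂₁, Matrix.det_fromBlocks_zero₁₂]
      using this
  have hdetV : V.det = U.det := Matrix.det_submatrix_equiv_self e U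
  -- identify blocks with principal minors
  have hB11 : V.toBlocks₁₁.det = principalMinor U σ := by
    congr 1
  have hB22 : W.toBlocks₂₂.det = (starRingEnd ℂ) (principalMinor U σᶜ) := by
    have h1 : W.toBlocks₂₂ =
        (U.submatrix (fun i : {x // ¬ x ∈ σ} => (i : Fin n))
          (fun i : {x // ¬ x ∈ σ} => (i : Fin n)))ᴴ := by
      ext i j
      simp [W, Matrix.toBlocks₂₂, e, Matrix.conjTranspose_apply]
    rw [h1, Matrix.det_conjTranspose]
    congr 1
    let q : {x // ¬ x ∈ σ} ≃ {x : Fin n // x ∈ σᶜ} :=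
      Equiv.subtypeEquivRight (fun x => (Finset.mem_compl (a := x)).symm)
    have : (U.submatrix (fun i : {x // ¬ x ∈ σ} => (i : Fin n))
          (fun i : {x // ¬ x ∈ σ} => (i : Fin n))) =
        ((U.submatrix (fun i : {x : Fin n // x ∈ σᶜ} => (i : Fin n)) (fun i : {x : Fin n // x ∈ σᶜ} => (i : Fin n))).submatrix q q) := by
      ext i j
      simp [q]
    rw [this]
    exact Matrix.det_submatrix_equiv_self q _
  rw [hdetV, hB11, hB22] at hdetkey
  -- conclude
  have := congrArg (starRingEnd ℂ) hdetkey
  simp only [_root_.map_mul, RingHom.id_apply, Complex.conj_conj] at this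
  calc principalMinor U σᶜ
      = ((starRingEnd ℂ) U.det * U.det) * principalMinor U σᶜ := by rw [hdet, one_mul]
    _ = U.det * ((starRingEnd ℂ) U.det * principalMinor U σᶜ) := by ring
    _ = U.det * (starRingEnd ℂ) (principalMinor U σ) := by rw [this]
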